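/- Let E be a real normed vector space, U ⊆ E an open set, ω a C¹ one-form on U, f : U → ℝ a C² function and λ : U → ℝ a C² function with λ(x) ≠ 0 for all x ∈ U, such that Df(x) = λ(x) • ω(x) for all x ∈ U. Then the C¹ one-form η defined by η(x) := λ(x)⁻¹ • Dλ(x) satisfies dω = ω ∧ η on U and dη = 0 on U; in particular the Godbillon–Vey integrand η ∧ dη vanishes identically on U. -/

import Mathlib

private lemma aux_antisym {E : Type*} [NormedAddCommGroup E] [NormedSpace ℝ E]
    {U : Set E} (hU : IsOpen U) {lam F : E → ℝ}
    (hlam : ContDiffOn ℝ 2 lam U) (hlamne : ∀ x ∈ U, lam x ≠ 0)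
    (hF : ContDiffOn ℝ 2 F U) {x : E} (hx : x ∈ U) (u v : E) :
    fderiv ℝ (fun y => (lam y)⁻¹ • fderiv ℝ F y) x u v
      - fderiv ℝ (fun y => (lam y)⁻¹ • fderiv ℝ F y) x v u
    = -((lam x) ^ 2)⁻¹ *
        (fderiv ℝ lam x u * fderiv ℝ F x v - fderiv ℝ lam x v * fderiv ℝ F x u) := by
  have hxn : U ∈ nhds x := hU.mem_nhds hx
  have hlamd : DifferentiableAt ℝ lam x :=
    (hlam.contDiffAt hxn).differentiableAt two_ne_zero
  have hinv : HasFDerivAt (fun y => (lam y)⁻¹)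
      ((-(lam x ^ 2)⁻¹) • fderiv ℝ lam x) x :=
    (hasDerivAt_inv (hlamne x hx)).comp_hasFDerivAt x hlamd.hasFDerivAt
  have hF' : DifferentiableAt ℝ (fderiv ℝ F) x :=
    ((hF.fderiv_of_isOpen (m := 1) hU (by norm_num)).contDiffAt hxn).differentiableAt one_ne_zero
  have hsym : fderiv ℝ (fderiv ℝ F) x u v = fderiv ℝ (fderiv ℝ F) x v u :=
    (hF.contDiffAt hxn).isSymmSndFDerivAt (by rw [minSmoothness_of_isRCLikeNormedField]) u v
  have hmain : fderiv ℝ (fun y => (lam y)⁻¹ • fderiv ℝ F y) x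
      = (lam x)⁻¹ • fderiv ℝ (fderiv ℝ F) x
        + ((-(lam x ^ 2)⁻¹) • fderiv ℝ lam x).smulRight (fderiv ℝ F x) := by
    rw [fderiv_fun_smul hinv.differentiableAt hF', hinv.fderiv]
  rw [hmain]
  simp only [ContinuousLinearMap.add_apply, ContinuousLinearMap.smul_apply,
    ContinuousLinearMap.smulRight_apply, ContinuousLinearMap.coe_smul', Pi.smul_apply,
    smul_eq_mul]
  rw [hsym]
  ring

/-- If `Df = λ • ω` on `U` with `f`, `λ` of class C² and `λ` nowhere zero, then the
one-form `η := λ⁻¹ • Dλ` satisfies `dω = ω ∧ η` and `dη = 0` on `U`; in particular the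
Godbillon–Vey integrand `η ∧ dη` vanishes identically on `U`. -/
theorem godbillon_vey_integrand_vanishes
    {E : Type*} [NormedAddCommGroup E] [NormedSpace ℝ E]
    (U : Set E) (hU : IsOpen U)
    (ω : E → (E →L[ℝ] ℝ)) (hω : ContDiffOn ℝ 1 ω U)
    (f : E → ℝ) (hf : ContDiffOn ℝ 2 f U)
    (lam : E → ℝ) (hlam : ContDiffOn ℝ 2 lam U) (hlamne : ∀ x ∈ U, lam x ≠ 0)
    (heuler : ∀ x ∈ U, fderiv ℝ f x = lam x • ω x)
    (η : E → (E →L[ℝ] ℝ)) (hη : ∀ x, η x = (lam x)⁻¹ • fderiv ℝ lam x) :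
    ∀ x ∈ U,
      (∀ u v : E,
        (fderiv ℝ ω x u) v - (fderiv ℝ ω x v) u
          = ω x u * η x v - ω x v * η x u) ∧
      (∀ u v : E, (fderiv ℝ η x u) v - (fderiv ℝ η x v) u = 0) ∧
      (∀ u v w : E,
        η x u * ((fderiv ℝ η x v) w - (fderiv ℝ η x w) v)
          - η x v * ((fderiv ℝ η x u) w - (fderiv ℝ η x w) u)
          + η x w * ((fderiv ℝ η x u) v - (fderiv ℝ η x v) u) = 0) := by
  intro x hx
  have hne := hlamne x hx
  -- ω agrees with λ⁻¹ • Df on U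
  have hωeq : ∀ y ∈ U, ω y = (lam y)⁻¹ • fderiv ℝ f y := by
    intro y hy
    rw [heuler y hy, smul_smul, inv_mul_cancel₀ (hlamne y hy), one_smul]
  have hfderivω : fderiv ℝ ω x = fderiv ℝ (fun y => (lam y)⁻¹ • fderiv ℝ f y) x := by
    apply Filter.EventuallyEq.fderiv_eq
    filter_upwards [hU.mem_nhds hx] with y hy using hωeq y hy
  have hfderivη : fderiv ℝ η x = fderiv ℝ (fun y => (lam y)⁻¹ • fderiv ℝ lam y) x := by
    congr 1; funext y; exact hη y
  have hdeta : ∀ u v : E, (fderiv ℝ η x u) v - (fderiv ℝ η x v) u = 0 := by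
    intro u v
    rw [hfderivη]
    rw [aux_antisym hU hlam hlamne hlam hx u v]
    ring
  refine ⟨?_, hdeta, ?_⟩
  · intro u v
    rw [hfderivω]
    have := aux_antisym hU hlam hlamne hf hx u v
    rw [this, heuler x hx, hη x]
    simp only [ContinuousLinearMap.smul_apply, smul_eq_mul]
    field_simp
    ring
  · intro u v w
    rw [hdeta u v, hdeta u w, hdeta v w]
    ring
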